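/- Let W be a symmetric nonnegative weight matrix on a graph with leader set S, and let x(t) evolve by ẋ = -Lx with leader states fixed. Then the convergence error f_t(S) = (Σ_{i∈V} min_{y∈Ā} |x_i(t) - y|^p)^{1/p} is nonincreasing in t: for any t₀ > 0 and t ≥ t₀, f_t(S) ≤ f_{t₀}(S). -/

import Mathlib

open Finset

section aux
variable {n : ℕ}

lemma pow_rowsum (A : Matrix (Fin n) (Fin n) ℝ) (h : ∀ i, ∑ j, A i j = 0) :
    ∀ (k : ℕ) (i), ∑ j, (A ^ k) i j = (if k = 0 then (1:ℝ) else 0) := by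
  intro k
  induction k with
  | zero => intro i; simp [Matrix.one_apply]
  | succ m ih =>
    intro i
    rw [pow_succ]
    simp only [Matrix.mul_apply]
    rw [Finset.sum_comm]
    simp only [← Finset.mul_sum]
    simp [h]

lemma pow_leader (A : Matrix (Fin n) (Fin n) ℝ) (S : Finset (Fin n))
    (h : ∀ i ∈ S, ∀ j, A i j = 0) :
    ∀ (k : ℕ), k ≠ 0 → ∀ i ∈ S, ∀ j, (A ^ k) i j = 0 := by
  intro k
  induction k with
  | zero => simp
  | succ m ih =>
    intro _ i hi j
    rw [pow_succ']
    simp only [Matrix.mul_apply]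
    exact Finset.sum_eq_zero fun m _ => by rw [h i hi m, zero_mul]

lemma pow_nonneg_entries (A : Matrix (Fin n) (Fin n) ℝ) (h : ∀ i j, 0 ≤ A i j) :
    ∀ (k : ℕ) (i j), 0 ≤ (A ^ k) i j := by
  intro k
  induction k with
  | zero => intro i j; rw [pow_zero, Matrix.one_apply]; split <;> norm_num
  | succ m ih =>
    intro i j
    rw [pow_succ]
    simp only [Matrix.mul_apply]
    exact Finset.sum_nonneg fun m _ => mul_nonneg (ih i m) (h m j)

lemma pow_symm (A : Matrix (Fin n) (Fin n) ℝ) (S : Finset (Fin n))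
    (hlead : ∀ i ∈ S, ∀ j, A i j = 0)
    (hsym : ∀ i ∉ S, ∀ j ∉ S, A i j = A j i) :
    ∀ (k : ℕ), ∀ i ∉ S, ∀ j ∉ S, (A ^ k) i j = (A ^ k) j i := by
  intro k
  induction k with
  | zero =>
    intro i _ j _
    rw [pow_zero]
    simp [Matrix.one_apply, eq_comm]
  | succ m ih =>
    intro i hi j hj
    conv_lhs => rw [pow_succ]
    conv_rhs => rw [pow_succ']
    simp only [Matrix.mul_apply]
    refine Finset.sum_congr rfl fun k _ => ?_
    by_cases hk : k ∈ S
    · rw [hlead k hk j, mul_zero]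
      rcases Nat.eq_zero_or_pos m with hm | hm
      · subst hm
        rw [pow_zero, Matrix.one_apply]
        have h1 : ¬ i = k := fun h => hi (h ▸ hk)
        have h2 : ¬ k = i := fun h => hi (h ▸ hk)
        simp [h1, h2]
      · rw [pow_leader A S hlead m (Nat.pos_iff_ne_zero.mp hm) k hk i, mul_zero]
    · rw [ih i hi k hk, hsym k hk j hj, mul_comm]
end aux

section expaux
variable {n : ℕ}
open NormedSpace

lemma exp_entry_hasSum (A : Matrix (Fin n) (Fin n) ℝ) (i j : Fin n) :
    HasSum (fun k : ℕ => ((Nat.factorial k : ℝ))⁻¹ * (A ^ k) i j) (NormedSpace.exp A i j) := by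
  letI : SeminormedRing (Matrix (Fin n) (Fin n) ℝ) := Matrix.linftyOpSemiNormedRing
  letI : NormedRing (Matrix (Fin n) (Fin n) ℝ) := Matrix.linftyOpNormedRing
  letI : NormedAlgebra ℝ (Matrix (Fin n) (Fin n) ℝ) := Matrix.linftyOpNormedAlgebra
  have h : HasSum (fun k : ℕ => ((Nat.factorial k : ℝ))⁻¹ • A ^ k) (NormedSpace.exp A) := by
    rw [NormedSpace.exp_eq_tsum ℝ]
    exact (NormedSpace.expSeries_summable' (𝕂 := ℝ) A).hasSum
  have h2 := Pi.hasSum.mp (Pi.hasSum.mp h i) j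
  simpa [Matrix.smul_apply] using h2

lemma exp_rowsum (A : Matrix (Fin n) (Fin n) ℝ) (h : ∀ i, ∑ j, A i j = 0) (i : Fin n) :
    ∑ j, NormedSpace.exp A i j = 1 := by
  have H := hasSum_sum (fun j (_ : j ∈ Finset.univ) => exp_entry_hasSum A i j)
  have He : (fun k : ℕ => ∑ j, ((Nat.factorial k : ℝ))⁻¹ * (A ^ k) i j)
      = fun k : ℕ => if k = 0 then (1:ℝ) else 0 := by
    funext k
    rw [← Finset.mul_sum, pow_rowsum A h k i]
    rcases eq_or_ne k 0 with hk | hk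
    · subst hk; simp
    · simp [hk]
  rw [He] at H
  have H2 : HasSum (fun k : ℕ => if k = 0 then (1:ℝ) else 0) 1 := by
    have := hasSum_single (f := fun k : ℕ => if k = 0 then (1:ℝ) else 0) 0
      (fun k hk => if_neg hk)
    simpa using this
  exact H.unique H2

lemma exp_leader (A : Matrix (Fin n) (Fin n) ℝ) (S : Finset (Fin n))
    (h : ∀ i ∈ S, ∀ j, A i j = 0) {i : Fin n} (hi : i ∈ S) (j : Fin n) :
    NormedSpace.exp A i j = if j = i then 1 else 0 := by
  have H2 : HasSum (fun k : ℕ => ((Nat.factorial k : ℝ))⁻¹ * (A ^ k) i j)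
      (if j = i then (1:ℝ) else 0) := by
    have := hasSum_single (f := fun k : ℕ => ((Nat.factorial k : ℝ))⁻¹ * (A ^ k) i j) 0
      (fun k hk => by show ((Nat.factorial k : ℝ))⁻¹ * (A ^ k) i j = 0
                      rw [pow_leader A S h k hk i hi j, mul_zero])
    simpa [Matrix.one_apply, eq_comm] using this
  exact (exp_entry_hasSum A i j).unique H2

lemma exp_symm (A : Matrix (Fin n) (Fin n) ℝ) (S : Finset (Fin n))
    (hlead : ∀ i ∈ S, ∀ j, A i j = 0)
    (hsym : ∀ i ∉ S, ∀ j ∉ S, A i j = A j i)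
    {i j : Fin n} (hi : i ∉ S) (hj : j ∉ S) :
    NormedSpace.exp A i j = NormedSpace.exp A j i := by
  have H := exp_entry_hasSum A j i
  have He : (fun k : ℕ => ((Nat.factorial k : ℝ))⁻¹ * (A ^ k) j i)
      = fun k : ℕ => ((Nat.factorial k : ℝ))⁻¹ * (A ^ k) i j := by
    funext k; rw [pow_symm A S hlead hsym k i hi j hj]
  rw [He] at H
  exact (exp_entry_hasSum A i j).unique H

lemma exp_entry_nonneg (A : Matrix (Fin n) (Fin n) ℝ) (h : ∀ i j, 0 ≤ A i j) (i j : Fin n) :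
    0 ≤ NormedSpace.exp A i j :=
  (exp_entry_hasSum A i j).nonneg fun k =>
    mul_nonneg (by positivity) (pow_nonneg_entries A h k i j)

lemma exp_smul_one (r : ℝ) :
    NormedSpace.exp (r • (1 : Matrix (Fin n) (Fin n) ℝ)) = Real.exp r • 1 := by
  ext i j
  have H := exp_entry_hasSum (r • (1 : Matrix (Fin n) (Fin n) ℝ)) i j
  have He : (fun k : ℕ => ((Nat.factorial k : ℝ))⁻¹ * ((r • (1 : Matrix (Fin n) (Fin n) ℝ)) ^ k) i j)
      = fun k : ℕ => (if i = j then (1:ℝ) else 0) * (((Nat.factorial k : ℝ))⁻¹ * r ^ k) := by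
    funext k
    rw [smul_pow, one_pow, Matrix.smul_apply, Matrix.one_apply]
    split <;> simp [smul_eq_mul] <;> ring
  rw [He] at H
  have Hr : HasSum (fun k : ℕ => ((Nat.factorial k : ℝ))⁻¹ * r ^ k) (Real.exp r) := by
    letI := Real.exp_eq_exp_ℝ
    rw [Real.exp_eq_exp_ℝ, NormedSpace.exp_eq_tsum ℝ]
    simpa [smul_eq_mul] using (NormedSpace.expSeries_summable' (𝕂 := ℝ) r).hasSum
  have := (Hr.mul_left (if i = j then (1:ℝ) else 0)).unique H
  rw [Matrix.smul_apply, Matrix.one_apply, ← this]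
  split <;> simp [smul_eq_mul]
end expaux

/-- Lemma 2 of the paper: for a symmetric nonnegative weight matrix `W`
and leader set `S`, the convergence error
`f_t(S) = (Σ_i min_{y∈Ā} |x_i(t) - y|^p)^{1/p}` of the dynamics `ẋ = -Lx`
(leader states held fixed) is nonincreasing in `t`: `f_t(S) ≤ f_{t₀}(S)` for `t ≥ t₀ > 0`. -/
theorem convergence_error_monotone {n : ℕ}
    (W : Matrix (Fin n) (Fin n) ℝ) (S : Finset (Fin n)) (hS : S.Nonempty)
    (hW_nonneg : ∀ i j, 0 ≤ W i j) (hW_symm : ∀ i j, W i j = W j i)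
    (x0 : Fin n → ℝ) (p : ℝ) (hp : 1 ≤ p)
    (L : Matrix (Fin n) (Fin n) ℝ)
    (hL : ∀ i j, L i j =
      if i ∈ S then 0
      else if j = i then ∑ k ∈ Finset.univ.erase i, W i k
      else -W i j)
    (x : ℝ → Fin n → ℝ)
    (hx : ∀ t : ℝ, x t = (NormedSpace.exp ((-t) • L)).mulVec x0)
    (f : ℝ → ℝ)
    (hf : ∀ t : ℝ, f t =
      (∑ i, sInf ((fun y => |x t i - y| ^ p) '' (convexHull ℝ (x0 '' ↑S)))) ^ (1 / p)) :
    ∀ t₀ t : ℝ, 0 < t₀ → t₀ ≤ t → f t ≤ f t₀ := by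
  intro t₀ t ht₀ htt
  classical
  have hp0 : (0:ℝ) < p := lt_of_lt_of_le one_pos hp
  -- basic facts about L
  have hLlead : ∀ i ∈ S, ∀ j, L i j = 0 := fun i hi j => by rw [hL]; simp [hi]
  have hLsym : ∀ i ∉ S, ∀ j ∉ S, L i j = L j i := by
    intro i hi j hj
    by_cases hij : j = i
    · subst hij; rfl
    · have hji : ¬ i = j := fun h => hij h.symm
      rw [hL i j, hL j i]
      simp [hi, hj, hij, hji, hW_symm i j]
  have hLrow : ∀ i, ∑ j, L i j = 0 := by
    intro i
    by_cases hi : i ∈ S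
    · exact Finset.sum_eq_zero fun j _ => hLlead i hi j
    · rw [← Finset.sum_erase_add Finset.univ _ (Finset.mem_univ i)]
      have h1 : L i i = ∑ k ∈ Finset.univ.erase i, W i k := by rw [hL]; simp [hi]
      have h2 : ∀ j ∈ Finset.univ.erase i, L i j = -W i j := fun j hj => by
        rw [hL]; simp [hi, (Finset.mem_erase.mp hj).1]
      rw [h1, Finset.sum_congr rfl h2, Finset.sum_neg_distrib]
      ring
  -- the transition matrix Q over the interval [t₀, t]
  set s : ℝ := t - t₀ with hs_def
  have hs : 0 ≤ s := by simp [hs_def]; linarith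
  set A : Matrix (Fin n) (Fin n) ℝ := (-s) • L with hA_def
  have hAentry : ∀ i j, A i j = -s * L i j := fun i j => by
    rw [hA_def, Matrix.smul_apply, smul_eq_mul]
  have hAlead : ∀ i ∈ S, ∀ j, A i j = 0 := fun i hi j => by
    rw [hAentry, hLlead i hi j, mul_zero]
  have hAsym : ∀ i ∉ S, ∀ j ∉ S, A i j = A j i := fun i hi j hj => by
    rw [hAentry, hAentry, hLsym i hi j hj]
  have hArow : ∀ i, ∑ j, A i j = 0 := fun i => by
    simp only [hAentry, ← Finset.mul_sum, hLrow i, mul_zero]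
  set Q : Matrix (Fin n) (Fin n) ℝ := NormedSpace.exp A with hQ_def
  have hQrow : ∀ i, ∑ j, Q i j = 1 := exp_rowsum A hArow
  have hQlead : ∀ i ∈ S, ∀ j, Q i j = if j = i then 1 else 0 := fun i hi j =>
    exp_leader A S hAlead hi j
  have hQsym : ∀ i ∉ S, ∀ j ∉ S, Q i j = Q j i := fun i hi j hj =>
    exp_symm A S hAlead hAsym hi hj
  -- nonnegativity of Q
  set c : ℝ := ∑ i, ∑ j, W i j with hc_def
  have hB : ∀ i j, 0 ≤ (s • (c • (1 : Matrix (Fin n) (Fin n) ℝ) - L)) i j := by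
    intro i j
    have hij : (s • (c • (1 : Matrix (Fin n) (Fin n) ℝ) - L)) i j
        = s * (c * (if i = j then 1 else 0) - L i j) := by
      simp [Matrix.smul_apply, Matrix.sub_apply, Matrix.one_apply]
    rw [hij]
    apply mul_nonneg hs
    by_cases hi : i ∈ S
    · rw [hLlead i hi j]
      have : 0 ≤ c := Finset.sum_nonneg fun a _ => Finset.sum_nonneg fun b _ => hW_nonneg a b
      split <;> nlinarith
    · rw [hL]
      by_cases hji : j = i
      · subst hji
        have h2 : ∑ k, W j k ≤ c :=
          Finset.single_le_sum (f := fun a => ∑ k, W a k)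
            (fun a _ => Finset.sum_nonneg fun b _ => hW_nonneg a b) (Finset.mem_univ j)
        simp [hi]
        linarith [hW_nonneg j j]
      · have hij' : ¬ i = j := fun h => hji h.symm
        simp [hi, hji, hij']
        nlinarith [hW_nonneg i j]
  have hQnn : ∀ i j, 0 ≤ Q i j := by
    have hsplit : A = s • (c • (1 : Matrix (Fin n) (Fin n) ℝ) - L)
        + (-(s*c)) • (1 : Matrix (Fin n) (Fin n) ℝ) := by
      rw [hA_def]
      ext i j
      by_cases h : i = j <;>
        simp [Matrix.add_apply, Matrix.sub_apply, Matrix.smul_apply, Matrix.one_apply, h,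
          smul_eq_mul] <;> ring
    have hcomm : Commute (s • (c • (1 : Matrix (Fin n) (Fin n) ℝ) - L))
        ((-(s*c)) • (1 : Matrix (Fin n) (Fin n) ℝ)) :=
      (Commute.one_right _).smul_right _
    have hQfac : Q = Real.exp (-(s*c)) •
        NormedSpace.exp (s • (c • (1 : Matrix (Fin n) (Fin n) ℝ) - L)) := by
      rw [hQ_def, hsplit, Matrix.exp_add_of_commute _ _ hcomm, exp_smul_one, mul_smul_comm,
        mul_one]
    intro i j
    rw [hQfac, Matrix.smul_apply, smul_eq_mul]
    exact mul_nonneg (Real.exp_nonneg _) (exp_entry_nonneg _ hB i j)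
  -- the semigroup property and the dynamics
  have hxt : ∀ i, x t i = ∑ j, Q i j * x t₀ j := by
    have hsg : (-t) • L = A + (-t₀) • L := by
      rw [hA_def, hs_def]
      ext i j
      simp only [Matrix.add_apply, Matrix.smul_apply, smul_eq_mul]
      ring
    have hcomm : Commute A ((-t₀) • L) := ((Commute.refl L).smul_left _).smul_right _
    intro i
    rw [hx t, hx t₀, hsg, Matrix.exp_add_of_commute _ _ hcomm, ← Matrix.mulVec_mulVec]
    simp [Matrix.mulVec, dotProduct, hQ_def]
  have hfix : ∀ j ∈ S, x t₀ j = x0 j := by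
    intro j hj
    have hA₀lead : ∀ i ∈ S, ∀ m, ((-t₀) • L) i m = 0 := fun i hi m => by
      rw [Matrix.smul_apply, hLlead i hi m, smul_zero]
    have he : ∀ m, NormedSpace.exp ((-t₀) • L) j m = if m = j then 1 else 0 :=
      exp_leader _ S hA₀lead hj
    rw [hx t₀]
    show ∑ m, NormedSpace.exp ((-t₀) • L) j m * x0 m = x0 j
    simp only [he, ite_mul, one_mul, zero_mul]
    simp [Finset.sum_ite_eq']
  -- the convex hull and the distance function
  set K : Set ℝ := convexHull ℝ (x0 '' ↑S) with hK_def
  have hKne : K.Nonempty := by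
    obtain ⟨j, hj⟩ := hS
    exact ⟨x0 j, subset_convexHull ℝ _ (Set.mem_image_of_mem x0 hj)⟩
  have hKcomp : IsCompact K := (S.finite_toSet.image x0).isCompact_convexHull ℝ
  have hKconv : Convex ℝ K := convex_convexHull ℝ _
  have hg : ∀ a : ℝ, sInf ((fun y => |a - y| ^ p) '' K) = Metric.infDist a K ^ p := by
    intro a
    obtain ⟨y₀, hy₀K, hy₀⟩ := hKcomp.exists_infDist_eq_dist hKne a
    apply le_antisymm
    · apply csInf_le
      · exact ⟨0, by rintro z ⟨y, hy, rfl⟩; positivity⟩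
      · exact ⟨y₀, hy₀K, by rw [hy₀, Real.dist_eq]⟩
    · apply le_csInf (hKne.image _)
      rintro z ⟨y, hy, rfl⟩
      have h1 : Metric.infDist a K ≤ |a - y| := by
        rw [← Real.dist_eq]; exact Metric.infDist_le_dist_of_mem hy
      exact Real.rpow_le_rpow Metric.infDist_nonneg h1 (le_of_lt hp0)
  set d : Fin n → ℝ := fun j => Metric.infDist (x t₀ j) K with hd_def
  set e : Fin n → ℝ := fun i => Metric.infDist (x t i) K with he_def
  choose y hyK hyd using fun j => hKcomp.exists_infDist_eq_dist hKne (x t₀ j)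
  -- convexity step
  have hconv : ∀ i, e i ≤ ∑ j, Q i j * d j := by
    intro i
    have hmem : ∑ j, Q i j • y j ∈ K :=
      hKconv.sum_mem (fun j _ => hQnn i j) (hQrow i) (fun j _ => hyK j)
    calc e i ≤ dist (x t i) (∑ j, Q i j • y j) := Metric.infDist_le_dist_of_mem hmem
      _ = |∑ j, Q i j * (x t₀ j - y j)| := by
          rw [Real.dist_eq, hxt i]
          congr 1
          rw [← Finset.sum_sub_distrib]
          exact Finset.sum_congr rfl fun j _ => by rw [smul_eq_mul]; ring
      _ ≤ ∑ j, |Q i j * (x t₀ j - y j)| := Finset.abs_sum_le_sum_abs _ _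
      _ = ∑ j, Q i j * d j := Finset.sum_congr rfl fun j _ => by
          rw [abs_mul, abs_of_nonneg (hQnn i j)]
          congr 1
          show |x t₀ j - y j| = Metric.infDist (x t₀ j) K
          rw [hyd j, Real.dist_eq]
  -- Jensen step
  have hjen : ∀ i, e i ^ p ≤ ∑ j, Q i j * d j ^ p := by
    intro i
    calc e i ^ p ≤ (∑ j, Q i j * d j) ^ p :=
          Real.rpow_le_rpow Metric.infDist_nonneg (hconv i) (le_of_lt hp0)
      _ ≤ ∑ j, Q i j * d j ^ p :=
          Real.rpow_arith_mean_le_arith_mean_rpow Finset.univ (fun j => Q i j) d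
            (fun j _ => hQnn i j) (hQrow i) (fun j _ => Metric.infDist_nonneg) hp
  -- column sums
  have hdS : ∀ j ∈ S, d j = 0 := fun j hj => by
    show Metric.infDist (x t₀ j) K = 0
    rw [hfix j hj]
    exact Metric.infDist_zero_of_mem (subset_convexHull ℝ _ (Set.mem_image_of_mem x0 hj))
  have hcol : ∀ j, (∑ i, Q i j) * d j ^ p ≤ d j ^ p := by
    intro j
    by_cases hj : j ∈ S
    · rw [hdS j hj, Real.zero_rpow (ne_of_gt hp0), mul_zero]
    · have h1 : ∑ i, Q i j ≤ 1 := by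
        rw [← Finset.sum_add_sum_compl S (fun i => Q i j)]
        have hz : ∑ i ∈ S, Q i j = 0 := Finset.sum_eq_zero fun i hi => by
          rw [hQlead i hi j]; exact if_neg (fun h => hj (by rw [h]; exact hi))
        rw [hz, zero_add]
        calc ∑ i ∈ Sᶜ, Q i j = ∑ i ∈ Sᶜ, Q j i :=
              Finset.sum_congr rfl fun i hi => hQsym i (Finset.mem_compl.mp hi) j hj
          _ ≤ ∑ i, Q j i := Finset.sum_le_sum_of_subset_of_nonneg (Finset.subset_univ _)
              (fun i _ _ => hQnn j i)
          _ = 1 := hQrow j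
      exact mul_le_of_le_one_left (Real.rpow_nonneg Metric.infDist_nonneg p) h1
  -- summing up
  have hsum : ∑ i, e i ^ p ≤ ∑ j, d j ^ p := by
    calc ∑ i, e i ^ p ≤ ∑ i, ∑ j, Q i j * d j ^ p := Finset.sum_le_sum fun i _ => hjen i
      _ = ∑ j, (∑ i, Q i j) * d j ^ p := by
          rw [Finset.sum_comm]
          exact Finset.sum_congr rfl fun j _ => (Finset.sum_mul _ _ _).symm
      _ ≤ ∑ j, d j ^ p := Finset.sum_le_sum fun j _ => hcol j
  rw [hf t, hf t₀]
  simp only [hg]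
  exact Real.rpow_le_rpow (Finset.sum_nonneg fun i _ =>
    Real.rpow_nonneg Metric.infDist_nonneg p) hsum (by positivity)
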